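/- Let n ≥ 1, let c₀,…,cₙ and d₀,…,dₙ be points of ℝ³, and let Λ, M ∈ ℝ be constants such that (1−Λ)·cᵢ + Λ·cᵢ₊₁ = (1−M)·dᵢ + M·dᵢ₊₁ for every i = 0,…,n−1. Define the Bézier curves c(u) = Σᵢ cᵢ·Bᵢⁿ(u) and d(u) = Σᵢ dᵢ·Bᵢⁿ(u), where Bᵢⁿ is the i-th Bernstein polynomial of degree n. Then c(u) + ((Λ − u)/n)·c'(u) = d(u) + ((M − u)/n)·d'(u) for all u. -/

import Mathlib

open Polynomial

lemma bern_eval_reduce_zero (m : ℕ) (u : ℝ) :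
    (bernsteinPolynomial ℝ (m+1) 0).eval u = (1-u) * (bernsteinPolynomial ℝ m 0).eval u := by
  simp [bernsteinPolynomial, pow_succ]
  ring

lemma bern_eval_reduce (m ν : ℕ) (u : ℝ) :
    (bernsteinPolynomial ℝ (m+1) (ν+1)).eval u
      = (1-u) * (bernsteinPolynomial ℝ m (ν+1)).eval u
        + u * (bernsteinPolynomial ℝ m ν).eval u := by
  rcases lt_trichotomy ν m with h | rfl | h
  · have h1 : m - ν = (m - (ν+1)) + 1 := by omega
    simp only [bernsteinPolynomial, Polynomial.eval_mul, Polynomial.eval_pow,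
      Polynomial.eval_natCast, Polynomial.eval_sub, Polynomial.eval_one, Polynomial.eval_X,
      Nat.succ_sub_succ, Nat.choose_succ_succ m ν]
    push_cast
    rw [h1, pow_succ]
    ring
  · simp [bernsteinPolynomial, Nat.choose_succ_self, Nat.succ_sub_succ, pow_succ]
    ring
  · have h1 : m + 1 < ν + 1 := by omega
    have h2 : m < ν := h
    simp [bernsteinPolynomial, Nat.choose_eq_zero_of_lt, h1, h2, Nat.choose_eq_zero_of_lt (by omega : m < ν + 1)]

lemma aumann_key (m : ℕ) (u Λ : ℝ) (v : Fin (m + 2) → Fin 3 → ℝ) :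
    (∑ i : Fin (m + 2), (bernsteinPolynomial ℝ (m+1) i).eval u • v i)
      + ((Λ - u) / ((m : ℝ) + 1)) •
        (∑ i : Fin (m + 2), ((Polynomial.derivative (bernsteinPolynomial ℝ (m+1) i)).eval u) • v i)
      = ∑ j : Fin (m + 1), (bernsteinPolynomial ℝ m j).eval u
          • ((1 - Λ) • v j.castSucc + Λ • v j.succ) := by
  have hm : ((m : ℝ) + 1) ≠ 0 := by positivity
  -- combine LHS into a single sum
  rw [Finset.smul_sum, ← Finset.sum_add_distrib]
  have hcoef : ∀ i : Fin (m + 2),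
      (bernsteinPolynomial ℝ (m+1) i).eval u • v i
        + ((Λ - u) / ((m : ℝ) + 1)) • ((Polynomial.derivative (bernsteinPolynomial ℝ (m+1) i)).eval u) • v i
      = ((bernsteinPolynomial ℝ (m+1) i).eval u
          + ((Λ - u) / ((m : ℝ) + 1)) * (Polynomial.derivative (bernsteinPolynomial ℝ (m+1) i)).eval u) • v i := by
    intro i
    rw [add_smul, smul_smul]
  simp only [hcoef]
  rw [Fin.sum_univ_succ]
  -- coefficient at 0
  have c0 : (bernsteinPolynomial ℝ (m+1) (0 : Fin (m+2))).eval u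
      + ((Λ - u) / ((m : ℝ) + 1)) * (Polynomial.derivative (bernsteinPolynomial ℝ (m+1) (0 : Fin (m+2)))).eval u
      = (1 - Λ) * (bernsteinPolynomial ℝ m 0).eval u := by
    simp only [Fin.val_zero, bernsteinPolynomial.derivative_zero, Nat.add_sub_cancel]
    rw [bern_eval_reduce_zero]
    simp only [Polynomial.eval_mul, Polynomial.eval_neg, Polynomial.eval_natCast]
    push_cast
    field_simp
    ring
  have cs : ∀ j : Fin (m + 1),
      (bernsteinPolynomial ℝ (m+1) (j.succ : Fin (m+2))).eval u
        + ((Λ - u) / ((m : ℝ) + 1)) * (Polynomial.derivative (bernsteinPolynomial ℝ (m+1) (j.succ : Fin (m+2)))).eval u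
      = (1 - Λ) * (bernsteinPolynomial ℝ m (j.val + 1)).eval u
        + Λ * (bernsteinPolynomial ℝ m j.val).eval u := by
    intro j
    simp only [Fin.val_succ, bernsteinPolynomial.derivative_succ, Nat.add_sub_cancel]
    rw [bern_eval_reduce]
    simp only [Polynomial.eval_mul, Polynomial.eval_sub, Polynomial.eval_natCast]
    push_cast
    field_simp
    ring
  rw [c0]
  simp only [cs]
  -- expand both sides
  have expand : ∀ j : Fin (m + 1),
      (bernsteinPolynomial ℝ m j).eval u • ((1 - Λ) • v j.castSucc + Λ • v j.succ)
      = ((1 - Λ) * (bernsteinPolynomial ℝ m j).eval u) • v j.castSucc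
        + (Λ * (bernsteinPolynomial ℝ m j).eval u) • v j.succ := by
    intro j
    rw [smul_add, smul_smul, smul_smul]
    ring_nf
  have expand2 : ∀ j : Fin (m + 1),
      ((1 - Λ) * (bernsteinPolynomial ℝ m (j.val + 1)).eval u
        + Λ * (bernsteinPolynomial ℝ m j.val).eval u) • v j.succ
      = ((1 - Λ) * (bernsteinPolynomial ℝ m (j.val + 1)).eval u) • v j.succ
        + (Λ * (bernsteinPolynomial ℝ m j.val).eval u) • v j.succ := fun j => add_smul _ _ _
  simp only [expand, expand2, Finset.sum_add_distrib]
  rw [← add_assoc]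
  congr 1
  -- remaining: (1-Λ)B₀ • v 0 + Σ (1-Λ)B_{j+1} • v j.succ = Σ (1-Λ)B_j • v j.castSucc
  have : ∀ i : Fin (m + 2), ((1 - Λ) * (bernsteinPolynomial ℝ m i).eval u) • v i
      = ((1 - Λ) * (bernsteinPolynomial ℝ m i).eval u) • v i := fun _ => rfl
  have key := Fin.sum_univ_succ (fun i : Fin (m + 2) =>
    ((1 - Λ) * (bernsteinPolynomial ℝ m i).eval u) • v i)
  have key2 := Fin.sum_univ_castSucc (fun i : Fin (m + 2) =>
    ((1 - Λ) * (bernsteinPolynomial ℝ m i).eval u) • v i)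
  have hz : (bernsteinPolynomial ℝ m (((Fin.last (m+1)) : Fin (m+2)) : ℕ)).eval u = 0 := by
    rw [Fin.val_last, bernsteinPolynomial.eq_zero_of_lt ℝ (by omega)]
    simp
  simp only [Fin.val_zero, Fin.val_succ, Fin.coe_castSucc] at key key2
  rw [← key, key2, Fin.val_last, bernsteinPolynomial.eq_zero_of_lt ℝ (by omega : m < m + 1)]
  simp

lemma bezier_deriv (n : ℕ) (cp : Fin (n + 1) → Fin 3 → ℝ) (c : ℝ → Fin 3 → ℝ)
    (hc : ∀ u, c u = ∑ i : Fin (n + 1), (bernsteinPolynomial ℝ n i).eval u • cp i) (u : ℝ) :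
    deriv c u = ∑ i : Fin (n + 1), ((Polynomial.derivative (bernsteinPolynomial ℝ n i)).eval u) • cp i := by
  have hce : c = fun u => ∑ i : Fin (n + 1), (bernsteinPolynomial ℝ n i).eval u • cp i :=
    funext hc
  rw [hce]
  have h : HasDerivAt (fun u : ℝ => ∑ i : Fin (n + 1), (bernsteinPolynomial ℝ n i).eval u • cp i)
      (∑ i : Fin (n + 1), ((Polynomial.derivative (bernsteinPolynomial ℝ n i)).eval u) • cp i) u := by
    apply HasDerivAt.fun_sum
    intro i _
    exact (Polynomial.hasDerivAt (bernsteinPolynomial ℝ n i) u).smul_const (cp i)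
  exact h.deriv

/-- Aumann's condition. If the control points of two Bézier curves
of degree `n` satisfy `(1−Λ)·cᵢ + Λ·cᵢ₊₁ = (1−M)·dᵢ + M·dᵢ₊₁` for all
`i = 0,…,n−1` with constants `Λ, M`, then the curves satisfy the developability
relation `c(u) + ((Λ−u)/n)·c'(u) = d(u) + ((M−u)/n)·d'(u)`. -/
theorem aumann_control_net_condition
    (n : ℕ) (hn : 1 ≤ n)
    (cp dp : Fin (n + 1) → Fin 3 → ℝ) (Λ M : ℝ)
    (hcell : ∀ i : Fin n,
      (1 - Λ) • cp i.castSucc + Λ • cp i.succ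
        = (1 - M) • dp i.castSucc + M • dp i.succ)
    (c d : ℝ → Fin 3 → ℝ)
    (hc : ∀ u, c u = ∑ i : Fin (n + 1), (bernsteinPolynomial ℝ n i).eval u • cp i)
    (hd : ∀ u, d u = ∑ i : Fin (n + 1), (bernsteinPolynomial ℝ n i).eval u • dp i) :
    ∀ u, c u + ((Λ - u) / (n : ℝ)) • deriv c u
       = d u + ((M - u) / (n : ℝ)) • deriv d u := by
  intro u
  obtain ⟨m, rfl⟩ : ∃ m, n = m + 1 := ⟨n - 1, (Nat.succ_pred_eq_of_pos hn).symm⟩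
  rw [bezier_deriv _ cp c hc u, bezier_deriv _ dp d hd u, hc u, hd u]
  have hcast : ((m + 1 : ℕ) : ℝ) = (m : ℝ) + 1 := by push_cast; ring
  rw [hcast]
  rw [aumann_key m u Λ cp, aumann_key m u M dp]
  exact Finset.sum_congr rfl fun j _ => by rw [hcell j]
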